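/- Let w and h be positive integers with h/w > 3 + 2√2. Then the number of Young diagrams of size w×h with an odd number of steps exceeds the number of Young diagrams of size w×h with an even number of steps if and only if w is odd. -/

import Mathlib

/-- `f : Fin h → ℕ` encodes a Young diagram of size `w × h`: a nondecreasing
sequence of positive integers `x₁ ≤ … ≤ x_h` with `x_h = w` (equivalently, for
a monotone sequence: all values are `≤ w` and the value `w` is attained). -/
def IsYoungDiagram (w : ℕ) {h : ℕ} (f : Fin h → ℕ) : Prop :=
  Monotone f ∧ (∀ i, 1 ≤ f i) ∧ (∀ i, f i ≤ w) ∧ (∃ i, f i = w)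

/-- The number of steps of a Young diagram: the number of distinct values
among `x₁, …, x_h`. -/
def numSteps {h : ℕ} (f : Fin h → ℕ) : ℕ := (Finset.univ.image f).card

/-- The number of Young diagrams of size `w × h` whose number of steps
satisfies the predicate `p`. -/
noncomputable def youngCount (w h : ℕ) (p : ℕ → Prop) : ℕ :=
  Nat.card {f : Fin h → ℕ // IsYoungDiagram w f ∧ p (numSteps f)}

open Finset


/-- number of elements of `V` smaller than `x` -/
def rankIn (V : Finset ℕ) (x : ℕ) : ℕ := (V.filter (· < x)).card

/-- the `j`-th smallest element of `V` -/
noncomputable def stepVal (V : Finset ℕ) (j : ℕ) : ℕ :=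
  sInf {x | x ∈ V ∧ rankIn V x = j}

/-- number of elements of `B` smaller than `i` -/
def rkk (B : Finset ℕ) (i : ℕ) : ℕ := (B.filter (· < i)).card

lemma rankIn_lt_card {V : Finset ℕ} {x : ℕ} (hx : x ∈ V) : rankIn V x < V.card := by
  have hsub : V.filter (· < x) ⊆ V.erase x := by
    intro y hy
    rw [Finset.mem_filter] at hy
    exact Finset.mem_erase.2 ⟨by omega, hy.1⟩
  calc rankIn V x ≤ (V.erase x).card := Finset.card_le_card hsub
    _ < V.card := Finset.card_erase_lt_of_mem hx

lemma rankIn_mono (V : Finset ℕ) {x y : ℕ} (hxy : x ≤ y) : rankIn V x ≤ rankIn V y := by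
  apply Finset.card_le_card
  intro z hz
  rw [Finset.mem_filter] at hz ⊢
  exact ⟨hz.1, by omega⟩

lemma rankIn_strict {V : Finset ℕ} {x y : ℕ} (hx : x ∈ V) (hxy : x < y) :
    rankIn V x < rankIn V y := by
  have h1 : insert x (V.filter (· < x)) ⊆ V.filter (· < y) := by
    intro z hz
    rcases Finset.mem_insert.1 hz with rfl | hz
    · exact Finset.mem_filter.2 ⟨hx, hxy⟩
    · rw [Finset.mem_filter] at hz ⊢
      exact ⟨hz.1, by omega⟩
  have h2 : x ∉ V.filter (· < x) := by
    simp [Finset.mem_filter]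
  calc rankIn V x < (insert x (V.filter (· < x))).card := by
        rw [Finset.card_insert_of_notMem h2, rankIn]; omega
    _ ≤ rankIn V y := Finset.card_le_card h1

lemma rankIn_injOn {V : Finset ℕ} {x y : ℕ} (hx : x ∈ V) (hy : y ∈ V)
    (hr : rankIn V x = rankIn V y) : x = y := by
  rcases lt_trichotomy x y with hlt | heq | hgt
  · exact absurd hr (Nat.ne_of_lt (rankIn_strict hx hlt))
  · exact heq
  · exact absurd hr.symm (Nat.ne_of_lt (rankIn_strict hy hgt))

lemma rankIn_surj {V : Finset ℕ} {j : ℕ} (hj : j < V.card) : ∃ x ∈ V, rankIn V x = j := by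
  have himg : V.image (rankIn V) = Finset.range V.card := by
    apply Finset.eq_of_subset_of_card_le
    · intro r hr
      obtain ⟨x, hx, rfl⟩ := Finset.mem_image.1 hr
      exact Finset.mem_range.2 (rankIn_lt_card hx)
    · rw [Finset.card_range, Finset.card_image_of_injOn (fun x hx y hy => rankIn_injOn hx hy)]
  have : j ∈ V.image (rankIn V) := himg ▸ Finset.mem_range.2 hj
  obtain ⟨x, hx, hxr⟩ := Finset.mem_image.1 this
  exact ⟨x, hx, hxr⟩

lemma stepVal_spec {V : Finset ℕ} {j : ℕ} (hj : j < V.card) :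
    stepVal V j ∈ V ∧ rankIn V (stepVal V j) = j := by
  obtain ⟨x, hx, hxr⟩ := rankIn_surj hj
  exact Nat.sInf_mem (⟨x, hx, hxr⟩ : {x | x ∈ V ∧ rankIn V x = j}.Nonempty)

lemma stepVal_rankIn {V : Finset ℕ} {x : ℕ} (hx : x ∈ V) :
    stepVal V (rankIn V x) = x := by
  have h := stepVal_spec (rankIn_lt_card hx)
  exact rankIn_injOn h.1 hx h.2

lemma stepVal_lt {V : Finset ℕ} {j j' : ℕ} (hjj : j < j') (hj' : j' < V.card) :
    stepVal V j < stepVal V j' := by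
  have h1 := stepVal_spec (lt_trans hjj hj')
  have h2 := stepVal_spec hj'
  by_contra hc
  push_neg at hc
  have := rankIn_mono V hc
  omega

lemma stepVal_le {V : Finset ℕ} {j j' : ℕ} (hjj : j ≤ j') (hj' : j' < V.card) :
    stepVal V j ≤ stepVal V j' := by
  rcases Nat.eq_or_lt_of_le hjj with rfl | hlt
  · exact le_refl _
  · exact le_of_lt (stepVal_lt hlt hj')

lemma stepVal_lt_iff {V : Finset ℕ} {j j' : ℕ} (hj : j < V.card) (hj' : j' < V.card) :
    stepVal V j < stepVal V j' ↔ j < j' := by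
  constructor
  · intro hlt
    by_contra hc
    push_neg at hc
    exact absurd hlt (not_lt.2 (stepVal_le hc hj))
  · intro h; exact stepVal_lt h hj'

lemma rankIn_max {V : Finset ℕ} {x : ℕ} (hx : x ∈ V) (hmax : ∀ y ∈ V, y ≤ x) :
    rankIn V x = V.card - 1 := by
  have : V.filter (· < x) = V.erase x := by
    ext y
    rw [Finset.mem_filter, Finset.mem_erase]
    constructor
    · rintro ⟨hy, hlt⟩; exact ⟨by omega, hy⟩
    · rintro ⟨hne, hy⟩
      exact ⟨hy, lt_of_le_of_ne (hmax y hy) hne⟩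
  rw [rankIn, this, Finset.card_erase_of_mem hx]

lemma stepVal_max {V : Finset ℕ} {x : ℕ} (hx : x ∈ V) (hmax : ∀ y ∈ V, y ≤ x) :
    stepVal V (V.card - 1) = x := by
  rw [← rankIn_max hx hmax, stepVal_rankIn hx]

lemma rkk_mono (B : Finset ℕ) {i i' : ℕ} (hi : i ≤ i') : rkk B i ≤ rkk B i' := by
  apply Finset.card_le_card
  intro z hz
  rw [Finset.mem_filter] at hz ⊢
  exact ⟨hz.1, by omega⟩

lemma rkk_le_card (B : Finset ℕ) (i : ℕ) : rkk B i ≤ B.card :=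
  Finset.card_le_card (Finset.filter_subset _ _)

lemma rkk_zero (B : Finset ℕ) : rkk B 0 = 0 := by
  simp [rkk]

lemma rkk_succ (B : Finset ℕ) (i : ℕ) :
    rkk B (i+1) = rkk B i + (if i ∈ B then 1 else 0) := by
  have hsplit : B.filter (· < i+1) = B.filter (· < i) ∪ B.filter (· = i) := by
    ext y
    simp only [Finset.mem_filter, Finset.mem_union]
    constructor
    · rintro ⟨hB, hy⟩
      rcases Nat.lt_or_ge y i with h | h
      · exact Or.inl ⟨hB, h⟩
      · exact Or.inr ⟨hB, by omega⟩
    · rintro (⟨hB, hy⟩ | ⟨hB, rfl⟩)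
      · exact ⟨hB, by omega⟩
      · exact ⟨hB, by omega⟩
  have hdisj : Disjoint (B.filter (· < i)) (B.filter (· = i)) := by
    rw [Finset.disjoint_left]
    intro a ha hb
    rw [Finset.mem_filter] at ha hb
    omega
  rw [rkk, hsplit, Finset.card_union_of_disjoint hdisj, Finset.filter_eq']
  split <;> simp [rkk]

lemma rkk_all {B : Finset ℕ} {t i : ℕ} (hB : B ⊆ Finset.range t) (hti : t ≤ i) :
    rkk B i = B.card := by
  unfold rkk
  rw [Finset.filter_true_of_mem]
  intro b hb
  have := Finset.mem_range.1 (hB hb)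
  omega

lemma rkk_exists {B : Finset ℕ} {t : ℕ} (hB : B ⊆ Finset.range t) {j : ℕ}
    (hj : j ≤ B.card) : ∃ i ≤ t, rkk B i = j := by
  have hne : t ∈ {i | j ≤ rkk B i} := by
    simp only [Set.mem_setOf_eq, rkk_all hB (le_refl t)]
    exact hj
  set i0 := sInf {i | j ≤ rkk B i} with hi0
  have hmem : j ≤ rkk B i0 := Nat.sInf_mem (⟨t, hne⟩ : {i | j ≤ rkk B i}.Nonempty)
  have hle : i0 ≤ t := Nat.sInf_le hne
  refine ⟨i0, hle, ?_⟩
  rcases Nat.eq_zero_or_pos i0 with h0 | hpos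
  · rw [h0] at hmem ⊢
    rw [rkk_zero] at hmem ⊢
    omega
  · have hnot : i0 - 1 ∉ {i | j ≤ rkk B i} := Nat.notMem_of_lt_sInf (by omega)
    simp only [Set.mem_setOf_eq, not_le] at hnot
    have := rkk_succ B (i0 - 1)
    have hi0e : i0 - 1 + 1 = i0 := by omega
    rw [hi0e] at this
    split at this <;> omega

lemma rankIn_def (V : Finset ℕ) (x : ℕ) : rankIn V x = (V.filter (· < x)).card := rfl

lemma rkk_def (B : Finset ℕ) (i : ℕ) : rkk B i = (B.filter (· < i)).card := rfl

/-- extension of `f : Fin h → ℕ` to `ℕ` -/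
def extF {h : ℕ} (f : Fin h → ℕ) : ℕ → ℕ := fun i => if hi : i < h then f ⟨i, hi⟩ else 0

/-- the set of values of the diagram other than `w` -/
def AOf {h : ℕ} (w : ℕ) (f : Fin h → ℕ) : Finset ℕ :=
  ((Finset.range h).image (extF f)).erase w

/-- the set of ascent positions of the diagram -/
def BOf {h : ℕ} (f : Fin h → ℕ) : Finset ℕ :=
  (Finset.range (h-1)).filter (fun i => extF f i < extF f (i+1))

/-- rebuild a diagram from value set and ascent set -/
noncomputable def fromPair {h : ℕ} (w : ℕ) (A B : Finset ℕ) : Fin h → ℕ :=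
  fun i => stepVal (insert w A) (rkk B i.val)

section facts
variable {w h : ℕ} {f : Fin h → ℕ}

lemma extF_eq (f : Fin h → ℕ) (i : Fin h) : extF f i.val = f i := by
  simp [extF, i.isLt]

lemma extF_mono (hm : Monotone f) {a b : ℕ} (hab : a ≤ b) (hb : b < h) :
    extF f a ≤ extF f b := by
  have ha : a < h := lt_of_le_of_lt hab hb
  simp only [extF, dif_pos ha, dif_pos hb]
  exact hm hab

lemma image_univ_eq (f : Fin h → ℕ) :
    Finset.univ.image f = (Finset.range h).image (extF f) := by
  ext x
  simp only [Finset.mem_image, Finset.mem_univ, true_and, Finset.mem_range]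
  constructor
  · rintro ⟨i, rfl⟩
    exact ⟨i.val, i.isLt, extF_eq f i⟩
  · rintro ⟨i, hi, rfl⟩
    exact ⟨⟨i, hi⟩, (extF_eq f ⟨i, hi⟩).symm⟩

/-- The central counting fact: the number of values below the current one equals
the number of ascents before the current position. -/
lemma rank_eq_rkk (hm : Monotone f) {i : ℕ} (hi : i < h) :
    rkk (BOf f) i = rankIn ((Finset.range h).image (extF f)) (extF f i) := by
  rw [rkk_def, rankIn_def]
  apply Finset.card_bij (fun j _ => extF f j)
  · -- maps into
    intro j hj
    simp only [Finset.mem_filter, BOf, Finset.mem_range] at hj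
    obtain ⟨⟨hjh, hasc⟩, hji⟩ := hj
    simp only [Finset.mem_filter, Finset.mem_image, Finset.mem_range]
    refine ⟨⟨j, by omega, rfl⟩, ?_⟩
    calc extF f j < extF f (j+1) := hasc
      _ ≤ extF f i := extF_mono hm (by omega) hi
  · -- injective
    intro a ha b hb hab
    simp only [Finset.mem_filter, BOf, Finset.mem_range] at ha hb
    obtain ⟨⟨hah, haasc⟩, hai⟩ := ha
    obtain ⟨⟨hbh, hbasc⟩, hbi⟩ := hb
    rcases lt_trichotomy a b with hlt | heq | hgt
    · exfalso
      have : extF f (a+1) ≤ extF f b := extF_mono hm (by omega) (by omega)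
      omega
    · exact heq
    · exfalso
      have : extF f (b+1) ≤ extF f a := extF_mono hm (by omega) (by omega)
      omega
  · -- surjective
    intro b hb
    simp only [Finset.mem_filter, Finset.mem_image, Finset.mem_range] at hb
    obtain ⟨⟨t0, ht0h, rfl⟩, hbF⟩ := hb
    have ht0i : t0 < i := by
      by_contra hc
      push_neg at hc
      exact absurd hbF (not_lt.2 (extF_mono hm hc ht0h))
    have hi1 : 1 ≤ i := by omega
    have hne : (i-1) ∈ {u | extF f t0 < extF f (u+1)} := by
      simp only [Set.mem_setOf_eq]
      have : i - 1 + 1 = i := by omega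
      rw [this]
      exact hbF
    set j := sInf {u | extF f t0 < extF f (u+1)} with hjdef
    have hjmem : extF f t0 < extF f (j+1) :=
      Nat.sInf_mem (⟨i-1, hne⟩ : {u | extF f t0 < extF f (u+1)}.Nonempty)
    have hjle : j ≤ i - 1 := Nat.sInf_le hne
    have hFjle : extF f j ≤ extF f t0 := by
      rcases Nat.eq_zero_or_pos j with h0 | hpos
      · rw [h0]
        exact extF_mono hm (Nat.zero_le _) ht0h
      · have hnot : j - 1 ∉ {u | extF f t0 < extF f (u+1)} :=
          Nat.notMem_of_lt_sInf (by omega)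
        simp only [Set.mem_setOf_eq, not_lt] at hnot
        have : j - 1 + 1 = j := by omega
        rwa [this] at hnot
    have hlej : extF f t0 ≤ extF f j := by
      have ht0j : t0 ≤ j := by
        by_contra hc
        push_neg at hc
        exact absurd hjmem (not_lt.2 (extF_mono hm (by omega) ht0h))
      exact extF_mono hm ht0j (by omega)
    have hFj : extF f j = extF f t0 := le_antisymm hFjle hlej
    refine ⟨j, ?_, hFj⟩
    simp only [Finset.mem_filter, BOf, Finset.mem_range]
    exact ⟨⟨by omega, by omega⟩, by omega⟩

end facts

section facts2
variable {w h : ℕ} {f : Fin h → ℕ}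

lemma w_mem_VOf (hf : IsYoungDiagram w f) :
    w ∈ (Finset.range h).image (extF f) := by
  obtain ⟨i, hi⟩ := hf.2.2.2
  exact Finset.mem_image.2 ⟨i.val, Finset.mem_range.2 i.isLt, by rw [extF_eq]; exact hi⟩

lemma VOf_le (hf : IsYoungDiagram w f) {x : ℕ}
    (hx : x ∈ (Finset.range h).image (extF f)) : 1 ≤ x ∧ x ≤ w := by
  obtain ⟨i, hi, rfl⟩ := Finset.mem_image.1 hx
  rw [Finset.mem_range] at hi
  rw [show extF f i = f ⟨i, hi⟩ from extF_eq f ⟨i, hi⟩]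
  exact ⟨hf.2.1 _, hf.2.2.1 _⟩

lemma filter_lt_w (hf : IsYoungDiagram w f) :
    ((Finset.range h).image (extF f)).filter (· < w) = AOf w f := by
  ext x
  rw [Finset.mem_filter, AOf, Finset.mem_erase]
  constructor
  · rintro ⟨hx, hlt⟩; exact ⟨by omega, hx⟩
  · rintro ⟨hne, hx⟩
    have := (VOf_le hf hx).2
    exact ⟨hx, by omega⟩

lemma AOf_card_eq (hf : IsYoungDiagram w f) (hh : 0 < h) :
    (AOf w f).card = (BOf f).card := by
  have h1 := rank_eq_rkk hf.1 (show h - 1 < h by omega)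
  have hlast : extF f (h-1) = w := by
    obtain ⟨i, hi⟩ := hf.2.2.2
    have h2 : f i ≤ f ⟨h-1, by omega⟩ := by
      apply hf.1
      rw [Fin.le_def]
      have := i.isLt
      simp only [Fin.val_mk]
      omega
    have h3 : f ⟨h-1, by omega⟩ ≤ w := hf.2.2.1 _
    rw [show extF f (h-1) = f ⟨h-1, by omega⟩ from extF_eq f ⟨h-1, by omega⟩]
    omega
  rw [hlast] at h1
  rw [rkk_all (show BOf f ⊆ Finset.range (h-1) from Finset.filter_subset _ _)
    (le_refl _)] at h1
  rw [rankIn_def, filter_lt_w hf] at h1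
  omega

lemma AOf_sub (hf : IsYoungDiagram w f) : AOf w f ⊆ Finset.Icc 1 (w-1) := by
  intro x hx
  rw [AOf, Finset.mem_erase] at hx
  have := VOf_le hf hx.2
  rw [Finset.mem_Icc]
  omega

lemma numSteps_eq_AOf (hf : IsYoungDiagram w f) : numSteps f = (AOf w f).card + 1 := by
  rw [numSteps, image_univ_eq, AOf]
  rw [Finset.card_erase_of_mem (w_mem_VOf hf)]
  have : 0 < ((Finset.range h).image (extF f)).card :=
    Finset.card_pos.2 ⟨w, w_mem_VOf hf⟩
  omega

lemma fromPair_eq (hf : IsYoungDiagram w f) : fromPair w (AOf w f) (BOf f) = f := by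
  funext i
  show stepVal (insert w (AOf w f)) (rkk (BOf f) i.val) = f i
  rw [AOf, Finset.insert_erase (w_mem_VOf hf), rank_eq_rkk hf.1 i.isLt, extF_eq,
    stepVal_rankIn]
  exact Finset.mem_image.2 ⟨i.val, Finset.mem_range.2 i.isLt, extF_eq f i⟩

end facts2

section facts3
variable {w h : ℕ} {A B : Finset ℕ}
  (hA : A ⊆ Finset.Icc 1 (w-1)) (hB : B ⊆ Finset.range (h-1))
  (hcard : A.card = B.card) (hw : 0 < w) (hh : 0 < h)

include hA hw in
lemma w_not_mem_A : w ∉ A := fun hx => by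
  have := Finset.mem_Icc.1 (hA hx); omega

include hA hw hcard in
lemma rkk_lt_cardV (i : ℕ) : rkk B i < (insert w A).card := by
  rw [Finset.card_insert_of_notMem (w_not_mem_A hA hw)]
  have := rkk_le_card B i
  omega

include hA hw in
lemma mem_insert_le {x : ℕ} (hx : x ∈ insert w A) : 1 ≤ x ∧ x ≤ w := by
  rcases Finset.mem_insert.1 hx with rfl | hx
  · omega
  · have := Finset.mem_Icc.1 (hA hx); omega

include hA hB hcard hw hh in
lemma fromPair_isYoung : IsYoungDiagram w (fromPair w A B : Fin h → ℕ) := by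
  refine ⟨?_, ?_, ?_, ?_⟩
  · intro i j hij
    exact stepVal_le (rkk_mono B hij) (rkk_lt_cardV hA hcard hw _)
  · intro i
    exact (mem_insert_le hA hw (stepVal_spec (rkk_lt_cardV hA hcard hw i.val)).1).1
  · intro i
    exact (mem_insert_le hA hw (stepVal_spec (rkk_lt_cardV hA hcard hw i.val)).1).2
  · refine ⟨⟨h-1, by omega⟩, ?_⟩
    show stepVal (insert w A) (rkk B (h-1)) = w
    rw [rkk_all hB (le_refl _), ← hcard]
    have hcv : (insert w A).card = A.card + 1 :=
      Finset.card_insert_of_notMem (w_not_mem_A hA hw)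
    rw [show A.card = (insert w A).card - 1 by omega]
    exact stepVal_max (Finset.mem_insert_self w A)
      (fun y hy => (mem_insert_le hA hw hy).2)

include hA hB hcard hw hh in
lemma fromPair_image :
    Finset.univ.image (fromPair w A B : Fin h → ℕ) = insert w A := by
  apply Finset.Subset.antisymm
  · intro x hx
    obtain ⟨i, _, rfl⟩ := Finset.mem_image.1 hx
    exact (stepVal_spec (rkk_lt_cardV hA hcard hw i.val)).1
  · intro x hx
    have hrlt : rankIn (insert w A) x < (insert w A).card := rankIn_lt_card hx
    have hrle : rankIn (insert w A) x ≤ B.card := by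
      rw [Finset.card_insert_of_notMem (w_not_mem_A hA hw)] at hrlt
      omega
    obtain ⟨i, hile, hieq⟩ := rkk_exists hB hrle
    refine Finset.mem_image.2 ⟨⟨i, by omega⟩, Finset.mem_univ _, ?_⟩
    show stepVal (insert w A) (rkk B i) = x
    rw [hieq, stepVal_rankIn hx]

include hA hB hcard hw hh in
lemma fromPair_numSteps : numSteps (fromPair w A B : Fin h → ℕ) = A.card + 1 := by
  rw [numSteps, fromPair_image hA hB hcard hw hh,
    Finset.card_insert_of_notMem (w_not_mem_A hA hw)]

include hA hB hcard hw hh in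
lemma AOf_fromPair : AOf w (fromPair w A B : Fin h → ℕ) = A := by
  rw [AOf, ← image_univ_eq, fromPair_image hA hB hcard hw hh,
    Finset.erase_insert (w_not_mem_A hA hw)]

include hA hB hcard hw hh in
lemma BOf_fromPair : BOf (fromPair w A B : Fin h → ℕ) = B := by
  ext i
  rw [BOf, Finset.mem_filter, Finset.mem_range]
  have key : ∀ j : ℕ, j < h → extF (fromPair w A B : Fin h → ℕ) j
      = stepVal (insert w A) (rkk B j) := by
    intro j hj
    rw [show extF (fromPair w A B : Fin h → ℕ) j = fromPair w A B ⟨j, hj⟩ from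
      extF_eq _ ⟨j, hj⟩]
    rfl
  constructor
  · rintro ⟨hih, hasc⟩
    rw [key i (by omega), key (i+1) (by omega)] at hasc
    rw [stepVal_lt_iff (rkk_lt_cardV hA hcard hw _) (rkk_lt_cardV hA hcard hw _)] at hasc
    have := rkk_succ B i
    split at this
    · assumption
    · omega
  · intro hiB
    have hih : i < h - 1 := Finset.mem_range.1 (hB hiB)
    refine ⟨hih, ?_⟩
    rw [key i (by omega), key (i+1) (by omega),
      stepVal_lt_iff (rkk_lt_cardV hA hcard hw _) (rkk_lt_cardV hA hcard hw _)]
    have := rkk_succ B i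
    rw [if_pos hiB] at this
    omega

end facts3

open Classical in
noncomputable def pairsF (w h : ℕ) (p : ℕ → Prop) : Finset (Finset ℕ × Finset ℕ) :=
  ((Finset.Icc 1 (w-1)).powerset ×ˢ (Finset.range (h-1)).powerset).filter
    (fun AB => AB.1.card = AB.2.card ∧ p (AB.1.card + 1))

lemma mem_pairsF {w h : ℕ} {p : ℕ → Prop} {AB : Finset ℕ × Finset ℕ} :
    AB ∈ pairsF w h p ↔ AB.1 ⊆ Finset.Icc 1 (w-1) ∧ AB.2 ⊆ Finset.range (h-1)
      ∧ AB.1.card = AB.2.card ∧ p (AB.1.card + 1) := by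
  simp only [pairsF, Finset.mem_filter, Finset.mem_product, Finset.mem_powerset]
  tauto

lemma youngCount_eq_pairs (w h : ℕ) (hw : 0 < w) (hh : 0 < h) (p : ℕ → Prop) :
    youngCount w h p = (pairsF w h p).card := by
  have hbij : Set.BijOn
      (fun AB : Finset ℕ × Finset ℕ => (fromPair w AB.1 AB.2 : Fin h → ℕ))
      ↑(pairsF w h p) {f : Fin h → ℕ | IsYoungDiagram w f ∧ p (numSteps f)} := by
    refine ⟨?_, ?_, ?_⟩
    · intro AB hAB
      rw [Finset.mem_coe, mem_pairsF] at hAB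
      obtain ⟨h1, h2, h3, h4⟩ := hAB
      exact ⟨fromPair_isYoung h1 h2 h3 hw hh,
        by rw [fromPair_numSteps h1 h2 h3 hw hh]; exact h4⟩
    · intro AB hAB AB' hAB' heq
      rw [Finset.mem_coe, mem_pairsF] at hAB hAB'
      have e1 : AB.1 = AB'.1 := by
        rw [← AOf_fromPair hAB.1 hAB.2.1 hAB.2.2.1 hw hh,
          ← AOf_fromPair hAB'.1 hAB'.2.1 hAB'.2.2.1 hw hh]
        exact congrArg _ heq
      have e2 : AB.2 = AB'.2 := by
        rw [← BOf_fromPair hAB.1 hAB.2.1 hAB.2.2.1 hw hh,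
          ← BOf_fromPair hAB'.1 hAB'.2.1 hAB'.2.2.1 hw hh]
        exact congrArg _ heq
      exact Prod.ext e1 e2
    · intro f hf
      rw [Set.mem_setOf_eq] at hf
      refine ⟨(AOf w f, BOf f), ?_, ?_⟩
      · rw [Finset.mem_coe, mem_pairsF]
        refine ⟨AOf_sub hf.1, Finset.filter_subset _ _, AOf_card_eq hf.1 hh, ?_⟩
        rw [← numSteps_eq_AOf hf.1]
        exact hf.2
      · exact fromPair_eq hf.1
  calc youngCount w h p
      = {f : Fin h → ℕ | IsYoungDiagram w f ∧ p (numSteps f)}.ncard := by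
        rw [youngCount, ← Nat.card_coe_set_eq]
        rfl
    _ = (↑(pairsF w h p) : Set (Finset ℕ × Finset ℕ)).ncard := by
        rw [← hbij.image_eq]
        exact Set.ncard_image_of_injOn hbij.injOn
    _ = (pairsF w h p).card := Set.ncard_coe_finset _

open Classical in
lemma pairsF_card (w h : ℕ) (hw : 0 < w) (p : ℕ → Prop) :
    (pairsF w h p).card
      = ∑ k ∈ Finset.range w, if p (k+1) then (w-1).choose k * (h-1).choose k else 0 := by
  classical
  have hsplit : pairsF w h p = (Finset.range w).biUnion (fun k =>
      if p (k+1) then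
        ((Finset.Icc 1 (w-1)).powersetCard k) ×ˢ ((Finset.range (h-1)).powersetCard k)
      else ∅) := by
    ext AB
    rw [mem_pairsF, Finset.mem_biUnion]
    constructor
    · rintro ⟨h1, h2, h3, h4⟩
      refine ⟨AB.1.card, ?_, ?_⟩
      · rw [Finset.mem_range]
        have := Finset.card_le_card h1
        rw [Nat.card_Icc] at this
        omega
      · rw [if_pos h4, Finset.mem_product, Finset.mem_powersetCard,
          Finset.mem_powersetCard]
        exact ⟨⟨h1, rfl⟩, ⟨h2, h3.symm⟩⟩
    · rintro ⟨k, _, hmem⟩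
      by_cases hp : p (k+1)
      · rw [if_pos hp, Finset.mem_product, Finset.mem_powersetCard,
          Finset.mem_powersetCard] at hmem
        obtain ⟨⟨hA, hAc⟩, ⟨hBs, hBc⟩⟩ := hmem
        subst hAc
        exact ⟨hA, hBs, by omega, hp⟩
      · rw [if_neg hp] at hmem
        exact absurd hmem (Finset.notMem_empty _)
  rw [hsplit, Finset.card_biUnion]
  · apply Finset.sum_congr rfl
    intro k _
    split_ifs
    · rw [Finset.card_product, Finset.card_powersetCard, Finset.card_powersetCard,
        Nat.card_Icc, Finset.card_range]
      congr 2
    · exact Finset.card_empty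
  · intro x _ y _ hxy
    simp only [Function.onFun]
    rw [Finset.disjoint_left]
    intro AB hABx hABy
    split_ifs at hABx hABy with hpx hpy
    · rw [Finset.mem_product, Finset.mem_powersetCard] at hABx hABy
      have := hABx.1.2
      have := hABy.1.2
      omega
    all_goals simp at hABx hABy


/-- the alternating sum `∑ (-1)^k C(m,k) C(n,k)` as a real number. -/
noncomputable def zz (n m : ℕ) : ℝ :=
  ∑ k ∈ Finset.range (m+1), (-1:ℝ)^k * (m.choose k) * (n.choose k)

lemma zz_ext (n m R : ℕ) (hR : m + 1 ≤ R) :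
    zz n m = ∑ k ∈ Finset.range R, (-1:ℝ)^k * (m.choose k) * (n.choose k) := by
  unfold zz
  refine Finset.sum_subset (by simpa using Finset.range_subset_range.2 hR) ?_
  intro k _ hk
  rw [Nat.choose_eq_zero_of_lt (by simpa using hk)]
  simp

lemma key_nat (m k : ℕ) :
    (m+2) * Nat.choose (m+2) k + k * Nat.choose (m+1) k + (2*m+2) * Nat.choose m k
      = (3*m+4) * Nat.choose (m+1) k + k * Nat.choose (m+1) (k-1) := by
  cases k with
  | zero => simp; ring
  | succ k =>
    rcases le_or_gt k (m+1) with hk | hk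
    · have h1 : Nat.choose (m+2) (k+1) = Nat.choose (m+1) k + Nat.choose (m+1) (k+1) :=
        Nat.choose_succ_succ _ _
      have h2 : Nat.choose (m+1) (k+1) = Nat.choose m k + Nat.choose m (k+1) :=
        Nat.choose_succ_succ _ _
      have h3 : (m+1) * Nat.choose m k = Nat.choose (m+1) (k+1) * (k+1) :=
        Nat.add_one_mul_choose_eq m k
      have h4 : Nat.choose (m+1) (k+1) * (k+1) = Nat.choose (m+1) k * (m+1-k) :=
        Nat.choose_succ_right_eq (m+1) k
      zify at h3
      zify [hk] at h4 ⊢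
      push_cast [h1, h2] at *
      linear_combination (-2:ℤ) * h3 - h4
    · have z1 : Nat.choose m (k+1) = 0 := Nat.choose_eq_zero_of_lt (by omega)
      have z2 : Nat.choose (m+1) (k+1) = 0 := Nat.choose_eq_zero_of_lt (by omega)
      have z3 : Nat.choose (m+2) (k+1) = 0 := Nat.choose_eq_zero_of_lt (by omega)
      have z4 : Nat.choose (m+1) k = 0 := Nat.choose_eq_zero_of_lt (by omega)
      simp [z1, z2, z3, z4]

lemma nC1 (n k : ℕ) :
    (n:ℝ) * (n.choose k) = ((k:ℝ)+1) * (n.choose (k+1)) + (k:ℝ) * (n.choose k) := by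
  rcases le_or_gt k n with hk | hk
  · have h := Nat.choose_succ_right_eq n k
    zify [hk] at h
    have h' : ((n.choose (k+1) : ℝ)) * ((k:ℝ)+1) = (n.choose k : ℝ) * ((n:ℝ) - k) := by
      exact_mod_cast h
    linarith
  · rw [Nat.choose_eq_zero_of_lt hk, Nat.choose_eq_zero_of_lt (by omega)]
    simp

lemma shiftSum (n m : ℕ) :
    ∑ k ∈ Finset.range (m+3), (-1:ℝ)^k * (((k:ℝ)+1) * ((m+1).choose k)) * (n.choose (k+1))
      = - ∑ k ∈ Finset.range (m+3), (-1:ℝ)^k * ((k:ℝ) * ((m+1).choose (k-1))) * (n.choose k) := by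
  rw [Finset.sum_range_succ'
    (fun k => (-1:ℝ)^k * ((k:ℝ) * ((m+1).choose (k-1))) * (n.choose k)) (m+2)]
  rw [Finset.sum_range_succ
    (fun k => (-1:ℝ)^k * (((k:ℝ)+1) * ((m+1).choose k)) * (n.choose (k+1))) (m+2)]
  have hz : ((m+1).choose (m+2) : ℝ) = 0 := by
    rw [Nat.choose_eq_zero_of_lt (by omega)]; simp
  simp only [hz]
  rw [neg_add, ← Finset.sum_neg_distrib]
  simp only [Nat.cast_zero, Nat.cast_succ]
  refine congrArg₂ (· + ·) (Finset.sum_congr rfl fun k _ => ?_) (by simp)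
  push_cast
  ring

lemma zz_rec (n m : ℕ) :
    ((m:ℝ)+2) * zz n (m+2) + (2*(m:ℝ)+2) * zz n m + (n:ℝ) * zz n (m+1)
      = (3*(m:ℝ)+4) * zz n (m+1) := by
  rw [zz_ext n m (m+3) (by omega), zz_ext n (m+1) (m+3) (by omega),
    zz_ext n (m+2) (m+3) (by omega)]
  have hA : (n:ℝ) * ∑ k ∈ Finset.range (m+3), (-1:ℝ)^k * ((m+1).choose k) * (n.choose k)
      = ∑ k ∈ Finset.range (m+3),
          (-1:ℝ)^k * ((k:ℝ) * ((m+1).choose k) - (k:ℝ) * ((m+1).choose (k-1))) * (n.choose k) := by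
    rw [Finset.mul_sum]
    have step1 : ∀ k ∈ Finset.range (m+3),
        (n:ℝ) * ((-1:ℝ)^k * ((m+1).choose k) * (n.choose k))
          = (-1:ℝ)^k * (((k:ℝ)+1) * ((m+1).choose k)) * (n.choose (k+1))
            + (-1:ℝ)^k * ((k:ℝ) * ((m+1).choose k)) * (n.choose k) := by
      intro k _
      have h := nC1 n k
      linear_combination ((-1:ℝ)^k * ((m+1).choose k)) * h
    calc ∑ k ∈ Finset.range (m+3), (n:ℝ) * ((-1:ℝ)^k * ((m+1).choose k) * (n.choose k))
        = ∑ k ∈ Finset.range (m+3),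
            ((-1:ℝ)^k * (((k:ℝ)+1) * ((m+1).choose k)) * (n.choose (k+1))
              + (-1:ℝ)^k * ((k:ℝ) * ((m+1).choose k)) * (n.choose k)) :=
          Finset.sum_congr rfl step1
      _ = (∑ k ∈ Finset.range (m+3), (-1:ℝ)^k * (((k:ℝ)+1) * ((m+1).choose k)) * (n.choose (k+1)))
            + ∑ k ∈ Finset.range (m+3), (-1:ℝ)^k * ((k:ℝ) * ((m+1).choose k)) * (n.choose k) :=
          Finset.sum_add_distrib
      _ = (- ∑ k ∈ Finset.range (m+3), (-1:ℝ)^k * ((k:ℝ) * ((m+1).choose (k-1))) * (n.choose k))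
            + ∑ k ∈ Finset.range (m+3), (-1:ℝ)^k * ((k:ℝ) * ((m+1).choose k)) * (n.choose k) := by
          rw [shiftSum]
      _ = ∑ k ∈ Finset.range (m+3),
            (-1:ℝ)^k * ((k:ℝ) * ((m+1).choose k) - (k:ℝ) * ((m+1).choose (k-1))) * (n.choose k) := by
          rw [← Finset.sum_neg_distrib, ← Finset.sum_add_distrib]
          refine Finset.sum_congr rfl fun k _ => ?_
          ring
  rw [hA, Finset.mul_sum, Finset.mul_sum, Finset.mul_sum, ← Finset.sum_add_distrib,
    ← Finset.sum_add_distrib]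
  refine Finset.sum_congr rfl fun k _ => ?_
  have h := key_nat m k
  have h' : ((m:ℝ)+2) * ((m+2).choose k) + (k:ℝ) * ((m+1).choose k)
        + (2*(m:ℝ)+2) * (m.choose k)
      = (3*(m:ℝ)+4) * ((m+1).choose k) + (k:ℝ) * ((m+1).choose (k-1)) := by
    exact_mod_cast h
  linear_combination ((-1:ℝ)^k * (n.choose k)) * h'

lemma zz_zero (n : ℕ) : zz n 0 = 1 := by simp [zz]

lemma zz_one (n : ℕ) : zz n 1 = 1 - n := by
  unfold zz
  rw [Finset.sum_range_succ, Finset.sum_range_one]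
  norm_num [Nat.choose]
  ring

lemma zz_sign (n w : ℕ) (hw : 0 < w)
    (hn : ((3:ℝ) + 2*Real.sqrt 2) * w < (n:ℝ) + 1) :
    0 < (-1:ℝ)^(w-1) * zz n (w-1) := by
  set s2 := Real.sqrt 2 with hs2
  have hs : s2^2 = 2 := Real.sq_sqrt (by norm_num)
  have hs0 : 0 ≤ s2 := Real.sqrt_nonneg 2
  have hs1 : 1 ≤ s2 := by nlinarith
  have key : ∀ j, j + 1 ≤ w →
      0 < (-1:ℝ)^j * zz n j ∧
        s2 * ((-1:ℝ)^j * zz n j) ≤ (-1:ℝ)^(j+1) * zz n (j+1) := by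
    intro j
    induction j with
    | zero =>
      intro h1
      have hwb : ((3:ℝ) + 2*s2) * 1 ≤ ((3:ℝ) + 2*s2) * w := by
        apply mul_le_mul_of_nonneg_left _ (by nlinarith)
        exact_mod_cast Nat.one_le_cast.mpr hw
      constructor
      · simp [zz_zero]
      · norm_num [zz_zero, zz_one]
        nlinarith
    | succ j ih =>
      intro h2
      obtain ⟨hq, hqs⟩ := ih (by omega)
      have hY : (0:ℝ) < (-1:ℝ)^(j+1) * zz n (j+1) :=
        lt_of_lt_of_le (by positivity) hqs
      refine ⟨hY, ?_⟩
      set X := (-1:ℝ)^j * zz n j with hX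
      set Y := (-1:ℝ)^(j+1) * zz n (j+1) with hYdef
      have hZeq : (-1:ℝ)^(j+2) * zz n (j+2) = (-1:ℝ)^j * zz n (j+2) := by
        rw [pow_add]; norm_num
      set Z := (-1:ℝ)^j * zz n (j+2) with hZdef
      rw [hZeq]
      -- the recurrence, multiplied by (-1)^j
      have hZ : ((j:ℝ)+2) * Z + (2*(j:ℝ)+2) * X - (n:ℝ) * Y = -((3*(j:ℝ)+4) * Y) := by
        have hrec := zz_rec n j
        rw [hX, hYdef, hZdef]
        have hpow : (-1:ℝ)^(j+1) = -(-1:ℝ)^j := by rw [pow_succ]; ring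
        rw [hpow]
        linear_combination ((-1:ℝ)^j) * hrec
      have hb : ((3:ℝ) + 2*s2) * ((j:ℝ)+2) < (n:ℝ) + 1 := by
        have hjw : ((j:ℝ)+2) ≤ (w:ℝ) := by exact_mod_cast h2
        have := mul_le_mul_of_nonneg_left hjw (show (0:ℝ) ≤ 3 + 2*s2 by nlinarith)
        linarith
      have hpos1 : 0 ≤ ((n:ℝ) - 3*j - 4 - s2*(2*j+3)) * Y := by
        apply mul_nonneg _ hY.le
        nlinarith
      have hpos2 : 0 ≤ s2*((j:ℝ)+1)*Y - 2*((j:ℝ)+1)*X := by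
        have h5 := mul_le_mul_of_nonneg_left hqs
          (show (0:ℝ) ≤ s2*((j:ℝ)+1) by positivity)
        have h6 : s2*((j:ℝ)+1)*(s2*X) = 2*((j:ℝ)+1)*X := by
          linear_combination ((j:ℝ)+1)*X*hs
        linarith
      have hfinal : ((j:ℝ)+2) * (Z - s2*Y)
          = ((n:ℝ) - 3*j - 4 - s2*(2*j+3))*Y + (s2*((j:ℝ)+1)*Y - 2*((j:ℝ)+1)*X) := by
        linear_combination hZ
      have h9 : (0:ℝ) ≤ ((j:ℝ)+2) * (Z - s2*Y) := by
        rw [hfinal]; exact add_nonneg hpos1 hpos2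
      have hj2 : (0:ℝ) < (j:ℝ)+2 := by positivity
      nlinarith [h9, hj2]
  exact (key (w-1) (by omega)).1


open Classical in
theorem stmt0 (w h : ℕ) (hw : 0 < w) (hh : 0 < h)
    (hratio : 3 + 2 * Real.sqrt 2 < (h : ℝ) / (w : ℝ)) :
    youngCount w h Even < youngCount w h Odd ↔ Odd w := by
  have hO := (youngCount_eq_pairs w h hw hh Odd).trans (pairsF_card w h hw Odd)
  have hE := (youngCount_eq_pairs w h hw hh Even).trans (pairsF_card w h hw Even)
  have hdiff : (youngCount w h Odd : ℝ) - youngCount w h Even = zz (h-1) (w-1) := by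
    rw [hO, hE, zz]
    have hr : (w-1)+1 = w := by omega
    rw [hr]
    push_cast
    rw [← Finset.sum_sub_distrib]
    apply Finset.sum_congr rfl
    intro k _
    rcases Nat.even_or_odd k with hk | hk
    · rw [if_pos (by simp [Nat.odd_add_one, Nat.not_odd_iff_even.2 hk]),
        if_neg (by simp [Nat.even_add_one, Nat.not_odd_iff_even.2 hk]), hk.neg_one_pow]
      ring
    · rw [if_neg (by simp [Nat.odd_add_one, Nat.not_even_iff_odd.2 hk]),
        if_pos (by simp [Nat.even_add_one, Nat.not_even_iff_odd.2 hk]), hk.neg_one_pow]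
      ring
  have hzpos : 0 < (-1:ℝ)^(w-1) * zz (h-1) (w-1) := by
    apply zz_sign (h-1) w hw
    have hc : ((h-1 : ℕ):ℝ) = (h:ℝ) - 1 := by
      rw [Nat.cast_sub (by omega : 1 ≤ h)]
      norm_num
    rw [hc]
    have := (lt_div_iff₀ (by exact_mod_cast hw : (0:ℝ) < w)).1 hratio
    linarith
  rcases Nat.even_or_odd w with hwE | hwO
  · have hodd1 : Odd (w-1) := Nat.Even.sub_odd (by omega) hwE odd_one
    rw [hodd1.neg_one_pow] at hzpos
    have hlt : youngCount w h Odd < youngCount w h Even := by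
      have : (youngCount w h Odd : ℝ) < youngCount w h Even := by linarith
      exact_mod_cast this
    exact iff_of_false (by omega) (Nat.not_odd_iff_even.2 hwE)
  · have heven1 : Even (w-1) := Nat.Odd.sub_odd hwO odd_one
    rw [heven1.neg_one_pow, one_mul] at hzpos
    have hlt : youngCount w h Even < youngCount w h Odd := by
      have : (youngCount w h Even : ℝ) < youngCount w h Odd := by linarith
      exact_mod_cast this
    exact iff_of_true hlt hwO
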